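/- Let A and B be Hom-finite k-linear categories admitting Serre functors S_A and S_B, and let F : A → B be a k-linear functor admitting a left adjoint L : B → A. Then S_A ∘ L ∘ S_B^{-1} is a right adjoint of F. -/
import Mathlib


set_option linter.unusedSectionVars false
set_option linter.unusedVariables false
open CategoryTheory

/-- A Serre functor on a Hom-finite `k`-linear category `C`: an autoequivalence `S`
together with pairings realising natural isomorphisms
`Hom(X, Y) ≅ Hom(Y, S X)^∨`, functorial in `X` and `Y`. -/
structure SerreFunctor (k : Type*) (C : Type*) [Field k] [Category C]
    [Preadditive C] [Linear k C] where
  S : C ⥤ C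
  isEquiv : S.IsEquivalence
  η : ∀ X Y : C, (X ⟶ Y) →ₗ[k] ((Y ⟶ S.obj X) →ₗ[k] k)
  η_bij : ∀ X Y : C, Function.Bijective (η X Y)
  nat : ∀ {X X' Y Y' : C} (a : X' ⟶ X) (b : Y ⟶ Y') (f : X ⟶ Y) (g : Y' ⟶ S.obj X'),
    η X' Y' (a ≫ f ≫ b) g = η X Y f (b ≫ g ≫ S.map a)

private lemma flip_bij {k V W : Type*} [Field k] [AddCommGroup V] [Module k V]
    [AddCommGroup W] [Module k W] [FiniteDimensional k V] [FiniteDimensional k W]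
    (η : V →ₗ[k] (Module.Dual k W)) (hη : Function.Bijective η) :
    Function.Bijective η.flip := by
  have hinj : Function.Injective η.flip := by
    rw [← LinearMap.ker_eq_bot, Submodule.eq_bot_iff]
    intro w hw
    rw [LinearMap.mem_ker] at hw
    rw [← Module.forall_dual_apply_eq_zero_iff k w]
    intro φ
    obtain ⟨v, rfl⟩ := hη.2 φ
    simpa using congrArg (fun f => f v) hw
  refine ⟨hinj, ?_⟩
  have hdim : Module.finrank k W = Module.finrank k (Module.Dual k V) := by
    rw [Subspace.dual_finrank_eq (K := k) (V := V),
      (LinearEquiv.ofBijective η hη).finrank_eq, Subspace.dual_finrank_eq]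
  exact (LinearMap.injective_iff_surjective_of_finrank_eq_finrank hdim).mp hinj

section Aux
variable {k : Type*} [Field k] {A B : Type*} [Category A] [Category B]
    [Preadditive A] [Linear k A] [Preadditive B] [Linear k B]
    [∀ X Y : A, FiniteDimensional k (X ⟶ Y)]
    [∀ X Y : B, FiniteDimensional k (X ⟶ Y)]
    (SA : SerreFunctor k A) (SB : SerreFunctor k B)
    (F : A ⥤ B) [F.Additive] [F.Linear k]
    (L : B ⥤ A) (adj : L ⊣ F)
    (SBinv : B ⥤ B) (e₂ : SBinv ⋙ SB.S ≅ 𝟭 B)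

/-- The pairing in the other direction, as an equiv onto the dual. -/
private noncomputable def dEq {C : Type*} [Category C] [Preadditive C] [Linear k C]
    [∀ X Y : C, FiniteDimensional k (X ⟶ Y)] (S : SerreFunctor k C) (X Y : C) :
    (Y ⟶ S.S.obj X) ≃ Module.Dual k (X ⟶ Y) :=
  Equiv.ofBijective (S.η X Y).flip (flip_bij _ (S.η_bij X Y))

private lemma dEq_apply {C : Type*} [Category C] [Preadditive C] [Linear k C]
    [∀ X Y : C, FiniteDimensional k (X ⟶ Y)] (S : SerreFunctor k C) (X Y : C)
    (g : Y ⟶ S.S.obj X) (f : X ⟶ Y) : dEq S X Y g f = S.η X Y f g := rfl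

private lemma dEq_inj {C : Type*} [Category C] [Preadditive C] [Linear k C]
    [∀ X Y : C, FiniteDimensional k (X ⟶ Y)] (S : SerreFunctor k C) {X Y : C}
    {g g' : Y ⟶ S.S.obj X} (h : ∀ f : X ⟶ Y, S.η X Y f g = S.η X Y f g') : g = g' :=
  (dEq S X Y).injective (LinearMap.ext h)

/-- The adjunction hom-equiv as a linear map. -/
private noncomputable def hL (Z : B) (X : A) : (L.obj Z ⟶ X) →ₗ[k] (Z ⟶ F.obj X) where
  toFun t := adj.homEquiv Z X t
  map_add' x y := by
    show adj.homEquiv Z X (x + y) = adj.homEquiv Z X x + adj.homEquiv Z X y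
    rw [Adjunction.homEquiv_unit, Adjunction.homEquiv_unit, Adjunction.homEquiv_unit,
      F.map_add, Preadditive.comp_add]
  map_smul' c x := by
    show adj.homEquiv Z X (c • x) = (RingHom.id k) c • adj.homEquiv Z X x
    rw [Adjunction.homEquiv_unit, Adjunction.homEquiv_unit, F.map_smul, Linear.comp_smul,
      RingHom.id_apply]

/-- The adjunction hom-equiv as a linear equivalence. -/
private noncomputable def hE (Z : B) (X : A) : (L.obj Z ⟶ X) ≃ₗ[k] (Z ⟶ F.obj X) :=
  LinearEquiv.ofBijective (hL F L adj Z X) (adj.homEquiv Z X).bijective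

private lemma hE_apply (Z : B) (X : A) (t : L.obj Z ⟶ X) :
    hE (k := k) F L adj Z X t = adj.homEquiv Z X t := rfl

private lemma hE_symm_apply (Z : B) (X : A) (w : Z ⟶ F.obj X) :
    (hE (k := k) F L adj Z X).symm w = (adj.homEquiv Z X).symm w := by
  apply (adj.homEquiv Z X).injective
  rw [Equiv.apply_symm_apply]
  exact ((hE (k := k) F L adj Z X).apply_symm_apply w)

/-- Forward map of the new adjunction. -/
private noncomputable def Φ (X : A) (Y : B) (u : F.obj X ⟶ Y) :
    X ⟶ SA.S.obj (L.obj (SBinv.obj Y)) :=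
  (dEq SA (L.obj (SBinv.obj Y)) X).symm
    (((dEq SB (SBinv.obj Y) (F.obj X)) (u ≫ e₂.inv.app Y)).comp
      (hE (k := k) F L adj (SBinv.obj Y) X).toLinearMap)

private lemma Φ_char (X : A) (Y : B) (u : F.obj X ⟶ Y) (t : L.obj (SBinv.obj Y) ⟶ X) :
    SA.η (L.obj (SBinv.obj Y)) X t (Φ SA SB F L adj SBinv e₂ X Y u)
      = SB.η (SBinv.obj Y) (F.obj X) (adj.homEquiv (SBinv.obj Y) X t) (u ≫ e₂.inv.app Y) := by
  have := (dEq SA (L.obj (SBinv.obj Y)) X).apply_symm_apply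
    (((dEq SB (SBinv.obj Y) (F.obj X)) (u ≫ e₂.inv.app Y)).comp
      (hE (k := k) F L adj (SBinv.obj Y) X).toLinearMap)
  exact DFunLike.congr_fun this t

/-- Backward map of the new adjunction. -/
private noncomputable def Ψ (X : A) (Y : B) (s : X ⟶ SA.S.obj (L.obj (SBinv.obj Y))) :
    F.obj X ⟶ Y :=
  ((dEq SB (SBinv.obj Y) (F.obj X)).symm
    (((dEq SA (L.obj (SBinv.obj Y)) X) s).comp
      (hE (k := k) F L adj (SBinv.obj Y) X).symm.toLinearMap)) ≫ e₂.hom.app Y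

private lemma Ψ_char (X : A) (Y : B) (s : X ⟶ SA.S.obj (L.obj (SBinv.obj Y)))
    (w : SBinv.obj Y ⟶ F.obj X) :
    SB.η (SBinv.obj Y) (F.obj X) w (Ψ SA SB F L adj SBinv e₂ X Y s ≫ e₂.inv.app Y)
      = SA.η (L.obj (SBinv.obj Y)) X ((adj.homEquiv (SBinv.obj Y) X).symm w) s := by
  have hcomp : Ψ SA SB F L adj SBinv e₂ X Y s ≫ e₂.inv.app Y
      = (dEq SB (SBinv.obj Y) (F.obj X)).symm
        (((dEq SA (L.obj (SBinv.obj Y)) X) s).comp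
          (hE (k := k) F L adj (SBinv.obj Y) X).symm.toLinearMap) := by
    simp [Ψ]
  rw [hcomp, ← hE_symm_apply (k := k) F L adj (SBinv.obj Y) X w]
  have := (dEq SB (SBinv.obj Y) (F.obj X)).apply_symm_apply
    (((dEq SA (L.obj (SBinv.obj Y)) X) s).comp
      (hE (k := k) F L adj (SBinv.obj Y) X).symm.toLinearMap)
  exact DFunLike.congr_fun this w

private lemma ΨΦ (X : A) (Y : B) (u : F.obj X ⟶ Y) :
    Ψ SA SB F L adj SBinv e₂ X Y (Φ SA SB F L adj SBinv e₂ X Y u) = u := by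
  have h : Ψ SA SB F L adj SBinv e₂ X Y (Φ SA SB F L adj SBinv e₂ X Y u) ≫ e₂.inv.app Y
      = u ≫ e₂.inv.app Y := by
    apply dEq_inj SB
    intro w
    rw [Ψ_char, Φ_char, Equiv.apply_symm_apply]
  have h2 := congrArg (fun z => z ≫ e₂.hom.app Y) h
  simpa using h2

private lemma ΦΨ (X : A) (Y : B) (s : X ⟶ SA.S.obj (L.obj (SBinv.obj Y))) :
    Φ SA SB F L adj SBinv e₂ X Y (Ψ SA SB F L adj SBinv e₂ X Y s) = s := by
  apply dEq_inj SA
  intro t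
  rw [Φ_char, Ψ_char, Equiv.symm_apply_apply]

/-- The hom equivalence. -/
private noncomputable def eqv (X : A) (Y : B) :
    (F.obj X ⟶ Y) ≃ (X ⟶ SA.S.obj (L.obj (SBinv.obj Y))) where
  toFun := Φ SA SB F L adj SBinv e₂ X Y
  invFun := Ψ SA SB F L adj SBinv e₂ X Y
  left_inv := ΨΦ SA SB F L adj SBinv e₂ X Y
  right_inv := ΦΨ SA SB F L adj SBinv e₂ X Y

private lemma Φ_nat_left {X' X : A} (Y : B) (f : X' ⟶ X) (u : F.obj X ⟶ Y) :
    Φ SA SB F L adj SBinv e₂ X' Y (F.map f ≫ u) = f ≫ Φ SA SB F L adj SBinv e₂ X Y u := by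
  apply dEq_inj SA
  intro t
  have hA := SA.nat (𝟙 (L.obj (SBinv.obj Y))) f t
    (Φ SA SB F L adj SBinv e₂ X Y u)
  rw [Category.id_comp, SA.S.map_id, Category.comp_id] at hA
  rw [Φ_char, ← hA, Φ_char, Adjunction.homEquiv_naturality_right]
  have hB := SB.nat (𝟙 (SBinv.obj Y)) (F.map f)
    (adj.homEquiv (SBinv.obj Y) X' t) (u ≫ e₂.inv.app Y)
  rw [Category.id_comp, SB.S.map_id, Category.comp_id] at hB
  rw [hB, Category.assoc]

private lemma Φ_nat_right (X : A) {Y Y' : B} (u : F.obj X ⟶ Y) (g : Y ⟶ Y') :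
    Φ SA SB F L adj SBinv e₂ X Y' (u ≫ g)
      = Φ SA SB F L adj SBinv e₂ X Y u ≫ SA.S.map (L.map (SBinv.map g)) := by
  apply dEq_inj SA
  intro t
  have hA := SA.nat (L.map (SBinv.map g)) (𝟙 X) t (Φ SA SB F L adj SBinv e₂ X Y u)
  rw [Category.id_comp, Category.comp_id] at hA
  rw [← hA, Φ_char, Φ_char, Adjunction.homEquiv_naturality_left]
  have hB := SB.nat (SBinv.map g) (𝟙 (F.obj X))
    (adj.homEquiv (SBinv.obj Y') X t) (u ≫ e₂.inv.app Y)
  rw [Category.id_comp, Category.comp_id] at hB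
  rw [hB]
  congr 1
  have hn := e₂.inv.naturality g
  simp only [Functor.id_map, Functor.comp_map] at hn
  rw [Category.assoc, hn]
  simp

end Aux

/-- If `A`, `B` are Hom-finite `k`-linear categories with Serre functors `S_A`, `S_B`
and `F : A ⥤ B` is a `k`-linear functor with left adjoint `L`, then
`S_A ∘ L ∘ S_B⁻¹` is a right adjoint of `F`. -/
theorem stmt_8 (k : Type*) [Field k] {A B : Type*} [Category A] [Category B]
    [Preadditive A] [Linear k A] [Preadditive B] [Linear k B]
    [∀ X Y : A, FiniteDimensional k (X ⟶ Y)]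
    [∀ X Y : B, FiniteDimensional k (X ⟶ Y)]
    (SA : SerreFunctor k A) (SB : SerreFunctor k B)
    (F : A ⥤ B) [F.Additive] [F.Linear k]
    (L : B ⥤ A) (adj : L ⊣ F)
    (SBinv : B ⥤ B) (e₁ : SB.S ⋙ SBinv ≅ 𝟭 B) (e₂ : SBinv ⋙ SB.S ≅ 𝟭 B) :
    Nonempty (F ⊣ (SBinv ⋙ L ⋙ SA.S)) := by
  refine ⟨Adjunction.mkOfHomEquiv ⟨eqv SA SB F L adj SBinv e₂, ?_, ?_⟩⟩
  · intro X' X Y f g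
    have h1 : Φ SA SB F L adj SBinv e₂ X' Y
        (F.map f ≫ Ψ SA SB F L adj SBinv e₂ X Y g) = f ≫ g := by
      rw [Φ_nat_left, ΦΨ]
    show Ψ SA SB F L adj SBinv e₂ X' Y (f ≫ g)
      = F.map f ≫ Ψ SA SB F L adj SBinv e₂ X Y g
    rw [← h1]
    exact ΨΦ SA SB F L adj SBinv e₂ X' Y _
  · intro X Y Y' u g
    show Φ SA SB F L adj SBinv e₂ X Y' (u ≫ g) = _
    rw [Φ_nat_right]
    rfl
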